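/- arXiv:2112.14694 — 4 statements merged into one kernel-verified Lean document; each statement's English description precedes it below -/
import Mathlib

section
/- Let A be a real 2×2 matrix with positive determinant that is not conformal, i.e. there exist unit vectors u, v such that the angle between Au and Av differs from the angle between u and v. Then there exists a rotation matrix R such that R·A has a positive real eigenvalue. -/
noncomputable section

/-- Euclidean inner product on `ℝ²`. -/
def dot2 (v w : Fin 2 → ℝ) : ℝ := v 0 * w 0 + v 1 * w 1

/-- Euclidean norm on `ℝ²`. -/
def nrm2 (v : Fin 2 → ℝ) : ℝ := Real.sqrt (dot2 v v)

/-- Angle between two planar vectors. -/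
def ang2 (v w : Fin 2 → ℝ) : ℝ := Real.arccos (dot2 v w / (nrm2 v * nrm2 w))

/-- The rotation matrix of angle `θ` (an arbitrary element of `SO(2,ℝ)`). -/
def rotM (θ : ℝ) : Matrix (Fin 2) (Fin 2) ℝ :=
  !![Real.cos θ, -Real.sin θ; Real.sin θ, Real.cos θ]

/-- If `(lam - p)(lam - s) = q r`, then `lam` is an eigenvalue of `!![p,q;r,s]`,
with an explicitly constructed eigenvector. -/
lemma eig_aux (p q r s lam : ℝ) (h : (lam - p) * (lam - s) = q * r) :
    ∃ x : Fin 2 → ℝ, x ≠ 0 ∧ (!![p, q; r, s]).mulVec x = lam • x := by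
  by_cases hqp : q = 0 ∧ lam = p
  · obtain ⟨hq, hp⟩ := hqp
    by_cases hrs : r = 0 ∧ lam = s
    · obtain ⟨hr, hs⟩ := hrs
      refine ⟨![1, 0], by simp [funext_iff, Fin.forall_fin_two], ?_⟩
      funext i
      fin_cases i <;>
        simp [Matrix.mulVec, dotProduct, Fin.sum_univ_two, hq, hr, hp, hs]
    · refine ⟨![lam - s, r], ?_, ?_⟩
      · intro h0
        apply hrs
        have h1 := congrFun h0 0
        have h2 := congrFun h0 1
        simp at h1 h2
        constructor
        · exact h2
        · linarith
      · funext i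
        fin_cases i <;>
          simp [Matrix.mulVec, dotProduct, Fin.sum_univ_two, hq, hp]
        all_goals first | ring1 | linear_combination h | linear_combination -h
  · refine ⟨![q, lam - p], ?_, ?_⟩
    · intro h0
      apply hqp
      have h1 := congrFun h0 0
      have h2 := congrFun h0 1
      simp at h1 h2
      constructor
      · exact h1
      · linarith
    · funext i
      fin_cases i <;>
        simp [Matrix.mulVec, dotProduct, Fin.sum_univ_two]
      all_goals first | ring1 | linear_combination h | linear_combination -h

/-- If `A` is a real 2×2 matrix with positive determinant which is
nonconformal (there exist unit vectors `u, v` with `∠(Au, Av) ≠ ∠(u, v)`), then some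
rotation `R` makes `R·A` have a positive real eigenvalue. -/
theorem exists_rotation_positive_eigenvalue
    (A : Matrix (Fin 2) (Fin 2) ℝ) (hdet : 0 < A.det)
    (hnonconf : ∃ u v : Fin 2 → ℝ, nrm2 u = 1 ∧ nrm2 v = 1 ∧
      ang2 (A.mulVec u) (A.mulVec v) ≠ ang2 u v) :
    ∃ θ : ℝ, ∃ lam : ℝ, 0 < lam ∧ ∃ x : Fin 2 → ℝ, x ≠ 0 ∧
      (rotM θ * A).mulVec x = lam • x := by
  clear hnonconf
  set a := A 0 0 with ha
  set b := A 0 1 with hb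
  set c := A 1 0 with hc
  set d := A 1 1 with hd
  have hdet' : A.det = a * d - b * c := Matrix.det_fin_two A
  set T := Real.sqrt ((a + d) ^ 2 + (b - c) ^ 2) with hTdef
  have hT2 : T ^ 2 = (a + d) ^ 2 + (b - c) ^ 2 :=
    Real.sq_sqrt (by positivity)
  have hTpos : 0 < T := by
    apply Real.sqrt_pos.mpr
    nlinarith [sq_nonneg (a - d), sq_nonneg (b + c), hdet, hdet']
  have hTne : T ≠ 0 := ne_of_gt hTpos
  set z : ℂ := ⟨a + d, b - c⟩ with hzdef
  have habs : ‖z‖ = T := by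
    rw [Complex.norm_def, Complex.normSq_mk]
    exact congrArg Real.sqrt (by ring)
  have hz0 : z ≠ 0 := by
    intro h0
    rw [h0, norm_zero] at habs
    exact hTne habs.symm
  set θ := Complex.arg z with hθ
  have hcos : Real.cos θ = (a + d) / T := by
    rw [hθ, Complex.cos_arg hz0, habs]
  have hsin : Real.sin θ = (b - c) / T := by
    rw [hθ, Complex.sin_arg, habs]
  have hΔ : 0 ≤ T ^ 2 - 4 * A.det := by nlinarith [sq_nonneg (a - d), sq_nonneg (b + c), hdet']
  set lam := (T + Real.sqrt (T ^ 2 - 4 * A.det)) / 2 with hlamdef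
  have hsq : Real.sqrt (T ^ 2 - 4 * A.det) ^ 2 = T ^ 2 - 4 * A.det := Real.sq_sqrt hΔ
  have hlampos : 0 < lam := by
    have := Real.sqrt_nonneg (T ^ 2 - 4 * A.det)
    rw [hlamdef]; linarith
  have hchar : lam ^ 2 - T * lam + A.det = 0 := by
    rw [hlamdef]; nlinarith [hsq]
  -- entries of rotM θ * A
  set p := Real.cos θ * a + (-Real.sin θ) * c with hp
  set q := Real.cos θ * b + (-Real.sin θ) * d with hq
  set r := Real.sin θ * a + Real.cos θ * c with hr
  set s := Real.sin θ * b + Real.cos θ * d with hs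
  have hM : rotM θ * A = !![p, q; r, s] := by
    rw [Matrix.eta_fin_two A, rotM, Matrix.mul_fin_two]
  have hps : p + s = T := by
    rw [hp, hs, hcos, hsin]
    field_simp
    linear_combination -hT2
  have hdetM : p * s - q * r = A.det := by
    have hpy := Real.sin_sq_add_cos_sq θ
    rw [hp, hs, hq, hr, hdet']
    linear_combination (a * d - b * c) * hpy
  have hkey : (lam - p) * (lam - s) = q * r := by
    have : (lam - p) * (lam - s) = lam ^ 2 - (p + s) * lam + (p * s - q * r) + q * r := by
      ring
    rw [this, hps, hdetM, hchar]
    ring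
  obtain ⟨x, hx0, hx⟩ := eig_aux p q r s lam hkey
  exact ⟨θ, lam, hlampos, x, hx0, by rw [hM]; exact hx⟩

end
end

section
/- Let g : ℝ² → ℝ² be a C¹ diffeomorphism fixing the origin with derivative Dg(0) = diag(λ, λ⁻¹), 0 < λ < 1. Then for any α ∈ (0, π/2) there exist τ > 0 and δ > 0 such that: whenever 0 < |z| < δ, z ∉ C_α, and |ω| < τ, the point R_ω(g(z)) obtained by rotating g(z) by angle ω satisfies R_ω(g(z)) ∉ C_α. In particular gᵏ(z) ∉ C_α for every k ∈ ℕ such that the orbit z, g(z), …, g^{k−1}(z) remains in the open disk of radius δ around the origin. -/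
open Real

noncomputable section

/-- The `α`-cone: `0` together with the nonzero vectors whose direction makes angle at
most `α` with the `x`-axis (on either side). -/
def cone (α : ℝ) : Set ℂ :=
  {z | z = 0 ∨ |Complex.arg z| ≤ α ∨ π - |Complex.arg z| ≤ α}

lemma not_mem_cone_iff {α : ℝ} (hα : α ∈ Set.Ioo 0 (π / 2)) (z : ℂ) :
    z ∉ cone α ↔ sin α * |z.re| < cos α * |z.im| := by
  obtain ⟨hα0, hα2⟩ := hα
  have hπ : 0 < π := pi_pos
  have hαπ : α < π := by linarith
  have hc : 0 < cos α := Real.cos_pos_of_mem_Ioo ⟨by linarith, hα2⟩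
  have hs : 0 < sin α := Real.sin_pos_of_pos_of_lt_pi hα0 hαπ
  have hsq : (‖z‖) ^ 2 = z.re ^ 2 + z.im ^ 2 := by
    rw [Complex.sq_norm, Complex.normSq_apply]; ring
  have hsc : sin α ^ 2 + cos α ^ 2 = 1 := sin_sq_add_cos_sq α
  constructor
  · intro h
    simp only [cone, Set.mem_setOf_eq, not_or, not_le] at h
    obtain ⟨hz0, h1, h2⟩ := h
    have habs : 0 < ‖z‖ := norm_pos_iff.mpr hz0
    have hmem : |z.arg| ∈ Set.Icc 0 π := ⟨abs_nonneg _, Complex.abs_arg_le_pi z⟩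
    have hcos1 : cos |z.arg| < cos α :=
      strictAntiOn_cos ⟨hα0.le, hαπ.le⟩ hmem h1
    have hcos2 : cos (π - α) < cos |z.arg| :=
      strictAntiOn_cos hmem ⟨by linarith, by linarith⟩ (by linarith)
    rw [Real.cos_pi_sub] at hcos2
    rw [Real.cos_abs] at hcos1 hcos2
    rw [Complex.cos_arg hz0] at hcos1 hcos2
    have hre : |z.re| < cos α * ‖z‖ := by
      have h3 : |z.re / ‖z‖| < cos α := abs_lt.mpr ⟨by linarith, hcos1⟩
      rw [abs_div, abs_of_pos habs, div_lt_iff₀ habs] at h3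
      linarith [h3]
    have hre2 : z.re ^ 2 < cos α ^ 2 * ‖z‖ ^ 2 := by
      nlinarith [abs_nonneg z.re, sq_abs z.re]
    have key : (sin α * |z.re|) ^ 2 < (cos α * |z.im|) ^ 2 := by
      nlinarith [sq_abs z.re, sq_abs z.im]
    exact lt_of_pow_lt_pow_left₀ 2 (mul_nonneg hc.le (abs_nonneg _)) key
  · intro h hmem
    have hz0 : z ≠ 0 := by
      rintro rfl; simp at h
    have habs : 0 < ‖z‖ := norm_pos_iff.mpr hz0
    have key : (|z.re|) ^ 2 < (cos α * ‖z‖) ^ 2 := by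
      have h2 : (sin α * |z.re|) ^ 2 < (cos α * |z.im|) ^ 2 :=
        pow_lt_pow_left₀ h (by positivity) two_ne_zero
      nlinarith [sq_abs z.re, sq_abs z.im, sq_nonneg z.re]
    have hre : |z.re| < cos α * ‖z‖ :=
      lt_of_pow_lt_pow_left₀ 2 (mul_nonneg hc.le (norm_nonneg _)) key
    have hcosarg : |cos z.arg| < cos α := by
      rw [Complex.cos_arg hz0, abs_div, abs_of_pos habs, div_lt_iff₀ habs]
      linarith
    rw [abs_lt] at hcosarg
    have hmem' : |z.arg| ∈ Set.Icc 0 π := ⟨abs_nonneg _, Complex.abs_arg_le_pi z⟩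
    have h1 : α < |z.arg| := by
      by_contra hle
      push_neg at hle
      have := strictAntiOn_cos.le_iff_ge ⟨hα0.le, hαπ.le⟩ hmem'
      have hge : cos α ≤ cos |z.arg| := this.mpr hle
      rw [Real.cos_abs] at hge
      linarith [hcosarg.2]
    have h2 : |z.arg| < π - α := by
      by_contra hle
      push_neg at hle
      have := strictAntiOn_cos.le_iff_ge hmem' (⟨by linarith, by linarith⟩ : π - α ∈ Set.Icc 0 π)
      have hge : cos |z.arg| ≤ cos (π - α) := this.mpr hle
      rw [Real.cos_abs, Real.cos_pi_sub] at hge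
      linarith [hcosarg.1]
    rcases hmem with h | h | h
    · exact hz0 h
    · linarith
    · linarith

set_option maxHeartbeats 1000000 in
lemma step_lemma (lam c s : ℝ) (hlam0 : 0 < lam) (hlam1 : lam < 1) (hc : 0 < c)
    (hc1 : c ≤ 1) (hs : 0 < s) (hs1 : s ≤ 1) (hcs : c ^ 2 + s ^ 2 = 1) (z w : ℂ)
    (hz : s * |z.re| < c * |z.im|)
    (hzw : ‖w - ((lam * z.re : ℝ) + (lam⁻¹ * z.im : ℝ) * Complex.I)‖
        ≤ (1 - lam ^ 2) * c * s / 4 * ‖z‖) :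
    s * |w.re| < c * |w.im| := by
  set A : ℂ := (lam * z.re : ℝ) + (lam⁻¹ * z.im : ℝ) * Complex.I with hA
  set D : ℝ := (1 - lam ^ 2) * c * s / 4 * ‖z‖ with hDdef
  have hμ : lam * lam⁻¹ = 1 := mul_inv_cancel₀ hlam0.ne'
  have hμ0 : 0 < lam⁻¹ := by positivity
  have hμ1 : 1 ≤ lam⁻¹ := by nlinarith
  have h1lam : 0 < 1 - lam ^ 2 := by nlinarith
  have hD0 : 0 ≤ D := le_trans (norm_nonneg _) hzw
  have hAre : (w - A).re = w.re - lam * z.re := by simp [hA]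
  have hAim : (w - A).im = w.im - lam⁻¹ * z.im := by simp [hA]
  have h1 : |w.re - lam * z.re| ≤ D := by
    rw [← hAre]; exact le_trans (Complex.abs_re_le_norm _) hzw
  have h2 : |w.im - lam⁻¹ * z.im| ≤ D := by
    rw [← hAim]; exact le_trans (Complex.abs_im_le_norm _) hzw
  have hsqz : (‖z‖) ^ 2 = z.re ^ 2 + z.im ^ 2 := by
    rw [Complex.sq_norm, Complex.normSq_apply]; ring
  -- s * |z| < |z.im|
  have hzy : s * ‖z‖ < |z.im| := by
    have hsq2 : (s * ‖z‖) ^ 2 < |z.im| ^ 2 := by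
      have h3 : (s * |z.re|) ^ 2 < (c * |z.im|) ^ 2 :=
        pow_lt_pow_left₀ hz (by positivity) two_ne_zero
      nlinarith [sq_abs z.re, sq_abs z.im, sq_nonneg z.im, hsqz, hcs, sq_nonneg z.re]
    exact lt_of_pow_lt_pow_left₀ 2 (abs_nonneg _) hsq2
  -- bounds on w parts
  have hW : |w.re| ≤ lam * |z.re| + D := by
    have := abs_sub_abs_le_abs_sub w.re (lam * z.re)
    have habs : |lam * z.re| = lam * |z.re| := by
      rw [abs_mul, abs_of_pos hlam0]
    linarith [h1, this, habs.le, habs.ge]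
  have hV : lam⁻¹ * |z.im| - D ≤ |w.im| := by
    have := abs_sub_abs_le_abs_sub (lam⁻¹ * z.im) w.im
    have habs : |lam⁻¹ * z.im| = lam⁻¹ * |z.im| := by
      rw [abs_mul, abs_of_pos hμ0]
    rw [abs_sub_comm] at this
    linarith [h2, this, habs.le, habs.ge]
  have p1 : s * |w.re| ≤ lam * (s * |z.re|) + D := by
    nlinarith [mul_le_mul_of_nonneg_left hW hs.le, hD0, hs1, abs_nonneg z.re,
      mul_nonneg (mul_nonneg hlam0.le hs.le) (abs_nonneg z.re)]
  have p2 : lam * (s * |z.re|) < lam * (c * |z.im|) := by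
    exact mul_lt_mul_of_pos_left hz hlam0
  have p3 : c * lam⁻¹ * |z.im| - D ≤ c * |w.im| := by
    nlinarith [mul_le_mul_of_nonneg_left hV hc.le, hD0, hc1]
  have p4 : 4 * D < (1 - lam ^ 2) * c * |z.im| := by
    rw [hDdef]
    have := mul_lt_mul_of_pos_left hzy (by positivity : (0:ℝ) < (1 - lam ^ 2) * c)
    nlinarith
  have p5 : (1 - lam ^ 2) * c * |z.im| ≤ c * lam⁻¹ * |z.im| - lam * (c * |z.im|) := by
    have key : 1 - lam ^ 2 ≤ lam⁻¹ - lam := by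
      nlinarith [hμ, mul_pos h1lam (show (0:ℝ) < 1 - lam by linarith)]
    nlinarith [mul_le_mul_of_nonneg_left key (mul_nonneg hc.le (abs_nonneg z.im))]
  linarith

set_option maxHeartbeats 1600000 in
/-- Let `g` be a planar C¹ diffeomorphism fixing the origin with
`Dg(0) = diag(λ, λ⁻¹)`, `0 < λ < 1`. Given `α ∈ (0, π/2)` there are `τ, δ > 0` such
that if `0 < |z| < δ`, `z ∉ C_α` and `|ω| < τ`, then the rotation by `ω` of `g(z)` is
not in `C_α`; in particular `gᵏ(z) ∉ C_α` as long as the orbit up to time `k - 1`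
stays in the disk of radius `δ`. -/
theorem rotated_image_outside_cone
    (g : ℂ → ℂ) (hg : ContDiff ℝ 1 g) (hbij : Function.Bijective g)
    (h0 : g 0 = 0) (lam : ℝ) (hlam0 : 0 < lam) (hlam1 : lam < 1)
    (hD : ∀ z : ℂ, fderiv ℝ g 0 z = (lam * z.re : ℝ) + (lam⁻¹ * z.im : ℝ) * Complex.I)
    (α : ℝ) (hα : α ∈ Set.Ioo 0 (π / 2)) :
    ∃ τ > 0, ∃ δ > 0,
      (∀ z : ℂ, 0 < ‖z‖ → ‖z‖ < δ → z ∉ cone α →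
        ∀ ω : ℝ, |ω| < τ → Complex.exp (ω * Complex.I) * g z ∉ cone α) ∧
      (∀ z : ℂ, 0 < ‖z‖ → ‖z‖ < δ → z ∉ cone α →
        ∀ k : ℕ, (∀ j < k, ‖g^[j] z‖ < δ) → g^[k] z ∉ cone α) := by
  obtain ⟨hα0, hα2⟩ := hα
  have hπ : 0 < π := pi_pos
  have hαπ : α < π := by linarith
  have hc : 0 < cos α := Real.cos_pos_of_mem_Ioo ⟨by linarith, hα2⟩
  have hs : 0 < sin α := Real.sin_pos_of_pos_of_lt_pi hα0 hαπ
  have hc1 : cos α ≤ 1 := Real.cos_le_one α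
  have hs1 : sin α ≤ 1 := Real.sin_le_one α
  have h1lam : 0 < 1 - lam ^ 2 := by nlinarith
  have hμ : lam * lam⁻¹ = 1 := mul_inv_cancel₀ hlam0.ne'
  have hμ0 : 0 < lam⁻¹ := by positivity
  set ε : ℝ := (1 - lam ^ 2) * cos α * sin α / 8 with hεdef
  have hε : 0 < ε := by positivity
  -- little-o bound
  have ho : (fun z => g z - fderiv ℝ g 0 z) =o[nhds 0] fun z : ℂ => z := by
    have h := ((hg.differentiable one_ne_zero) 0).hasFDerivAt
    simpa [h0] using h.isLittleO
  have hev := ho.def hε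
  rw [Metric.eventually_nhds_iff] at hev
  obtain ⟨δ, hδ, hbound⟩ := hev
  set τ : ℝ := min 1 (lam * (1 - lam ^ 2) * cos α * sin α / 16) with hτdef
  have hτ : 0 < τ := lt_min one_pos (by positivity)
  have key : ∀ z : ℂ, 0 < ‖z‖ → ‖z‖ < δ → z ∉ cone α →
      ∀ ω : ℝ, |ω| < τ → Complex.exp (ω * Complex.I) * g z ∉ cone α := by
    intro z hz0 hzδ hzc ω hω
    rw [not_mem_cone_iff ⟨hα0, hα2⟩] at hzc ⊢
    apply step_lemma lam (cos α) (sin α) hlam0 hlam1 hc hc1 hs hs1 (by nlinarith [sin_sq_add_cos_sq α]) z _ ?_ ?_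
    · simpa using hzc
    set A : ℂ := (lam * z.re : ℝ) + (lam⁻¹ * z.im : ℝ) * Complex.I with hAdef
    have hgA : ‖g z - A‖ ≤ ε * ‖z‖ := by
      have hd : dist z 0 < δ := by simpa [Complex.dist_eq] using hzδ
      have := hbound hd
      rw [hD z] at this
      exact this
    have hA : ‖A‖ ≤ lam⁻¹ * ‖z‖ := by
      have hsq : ‖A‖ ^ 2 ≤ (lam⁻¹ * ‖z‖) ^ 2 := by
        have hAre : A.re = lam * z.re := by simp [hAdef]
        have hAim : A.im = lam⁻¹ * z.im := by simp [hAdef]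
        rw [Complex.sq_norm, Complex.normSq_apply, hAre, hAim]
        have hsqz : (‖z‖) ^ 2 = z.re ^ 2 + z.im ^ 2 := by
          rw [Complex.sq_norm, Complex.normSq_apply]; ring
        nlinarith [sq_nonneg z.re, sq_nonneg z.im, sq_nonneg (lam⁻¹ - lam)]
      exact le_of_pow_le_pow_left₀ two_ne_zero (by positivity) hsq
    have hrot : ‖Complex.exp (ω * Complex.I) - 1‖ ≤ 2 * |ω| := by
      have habsω : ‖(ω : ℂ) * Complex.I‖ = |ω| := by
        simp
      have hle1 : ‖(ω : ℂ) * Complex.I‖ ≤ 1 := by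
        rw [habsω]; exact le_of_lt (lt_of_lt_of_le hω (min_le_left _ _))
      have := Complex.norm_exp_sub_one_le hle1
      rwa [habsω] at this
    have hsplit : Complex.exp (ω * Complex.I) * g z - A
        = Complex.exp (ω * Complex.I) * (g z - A)
          + (Complex.exp (ω * Complex.I) - 1) * A := by ring
    have hω' : |ω| ≤ lam * (1 - lam ^ 2) * cos α * sin α / 16 :=
      le_trans hω.le (min_le_right _ _)
    calc ‖Complex.exp (ω * Complex.I) * g z - A‖
        ≤ ‖Complex.exp (ω * Complex.I) * (g z - A)‖
          + ‖(Complex.exp (ω * Complex.I) - 1) * A‖ := by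
          rw [hsplit]; exact norm_add_le _ _
      _ ≤ ε * ‖z‖ + 2 * |ω| * (lam⁻¹ * ‖z‖) := by
          rw [norm_mul, norm_mul, Complex.norm_exp_ofReal_mul_I, one_mul]
          exact add_le_add hgA (mul_le_mul hrot hA (norm_nonneg _) (by positivity))
      _ ≤ (1 - lam ^ 2) * cos α * sin α / 4 * ‖z‖ := by
          have h2 : 2 * |ω| * lam⁻¹ ≤ (1 - lam ^ 2) * cos α * sin α / 8 := by
            have heq : (1 - lam ^ 2) * cos α * sin α / 8
                = 2 * (lam * (1 - lam ^ 2) * cos α * sin α / 16) * lam⁻¹ := by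
              field_simp; ring
            rw [heq]
            have h4 := mul_le_mul_of_nonneg_right hω' hμ0.le
            nlinarith [h4]
          have h3 := mul_le_mul_of_nonneg_right h2 (norm_nonneg z)
          simp only [hεdef]
          nlinarith [h3]
  refine ⟨τ, hτ, δ, hδ, key, ?_⟩
  intro z hz0 hzδ hzc k hk
  induction k with
  | zero => simpa using hzc
  | succ n ih =>
    have hn : g^[n] z ∉ cone α := ih (fun j hj => hk j (Nat.lt_succ_of_lt hj))
    have hne : g^[n] z ≠ 0 := fun h => hn (Or.inl h)
    have h1 : 0 < ‖g^[n] z‖ := norm_pos_iff.mpr hne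
    have h2 : ‖g^[n] z‖ < δ := hk n (Nat.lt_succ_self n)
    have h3 := key _ h1 h2 hn 0 (by simpa using hτ)
    rw [Function.iterate_succ_apply']
    simpa using h3

end
end

section
/- Let g : ℝ² → ℝ² be an orientation-preserving homeomorphism fixing the origin that maps every circle centered at the origin onto a circle centered at the origin, and suppose g is differentiable at the origin with invertible derivative A = Dg(0). Then A is a conformal matrix, i.e. A is a positive scalar multiple of a rotation. -/
/-- Let `g` be an orientation-preserving homeomorphism of the plane
fixing the origin, mapping every circle centered at the origin onto a circle centered at
the origin, and differentiable at the origin with invertible derivative `A` of positive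
determinant. Then `A` is conformal: a positive scalar multiple of a rotation. -/
theorem circle_preserving_derivative_conformal
    (g : ℂ ≃ₜ ℂ) (h0 : g 0 = 0)
    (A : ℂ →L[ℝ] ℂ) (hA : HasFDerivAt (⇑g) A 0)
    (hdet : 0 < LinearMap.det (A : ℂ →ₗ[ℝ] ℂ))
    (hcirc : ∀ r : ℝ, 0 < r → ∃ r' : ℝ, 0 < r' ∧
      (⇑g) '' Metric.sphere (0 : ℂ) r = Metric.sphere (0 : ℂ) r') :
    ∃ ρ : ℝ, 0 < ρ ∧ ∃ θ : ℝ, ∀ z : ℂ,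
      A z = ρ • (Complex.exp (θ * Complex.I) * z) := by
  -- Step 0: radial limit
  have key : ∀ w : ℂ, ‖w‖ = 1 →
      Filter.Tendsto (fun r : ℝ => ‖r‖⁻¹ * ‖g (r • w)‖) (nhdsWithin 0 (Set.Ioi 0))
        (nhds ‖A w‖) := by
    intro w hw
    have h1 : HasDerivAt (fun r : ℝ => r • w) w 0 := by
      simpa using (hasDerivAt_id (0 : ℝ)).smul_const w
    have h2 : HasFDerivAt (⇑g) A ((fun r : ℝ => r • w) 0) := by
      simpa using hA
    have hc : HasDerivAt (fun r : ℝ => g (r • w)) (A w) 0 :=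
      h2.comp_hasDerivAt 0 h1
    have hs := hasDerivAt_iff_tendsto_slope.mp hc
    have hs' : Filter.Tendsto (slope (fun r : ℝ => g (r • w)) 0)
        (nhdsWithin 0 (Set.Ioi 0)) (nhds (A w)) :=
      hs.mono_left (nhdsWithin_mono _ (fun x hx => ne_of_gt hx))
    have := hs'.norm
    refine this.congr' ?_
    filter_upwards [self_mem_nhdsWithin] with r hr
    have : slope (fun r : ℝ => g (r • w)) 0 r = r⁻¹ • g (r • w) := by
      simp [slope_def_field, slope, h0, div_eq_inv_mul]
    rw [this, norm_smul, norm_inv]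
  -- Step 1: norms equal on unit circle
  have norm_eq : ∀ u v : ℂ, ‖u‖ = 1 → ‖v‖ = 1 → ‖A u‖ = ‖A v‖ := by
    intro u v hu hv
    have hev : (fun r : ℝ => ‖r‖⁻¹ * ‖g (r • u)‖) =ᶠ[nhdsWithin 0 (Set.Ioi 0)]
        (fun r : ℝ => ‖r‖⁻¹ * ‖g (r • v)‖) := by
      filter_upwards [self_mem_nhdsWithin] with r hr
      obtain ⟨r', hr', himg⟩ := hcirc r hr
      have hmem : ∀ x : ℂ, ‖x‖ = 1 → ‖g (r • x)‖ = r' := by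
        intro x hx
        have hx' : r • x ∈ Metric.sphere (0 : ℂ) r := by
          simp [norm_smul, hx, abs_of_pos (show (0:ℝ) < r from hr)]
        have : g (r • x) ∈ Metric.sphere (0 : ℂ) r' := by
          rw [← himg]; exact Set.mem_image_of_mem _ hx'
        simpa using this
      rw [hmem u hu, hmem v hv]
    exact tendsto_nhds_unique ((key u hu).congr' hev) (key v hv)
  -- Step 2: ‖A z‖ = c ‖z‖
  set c : ℝ := ‖A 1‖ with hc
  have hnorm : ∀ z : ℂ, ‖A z‖ = c * ‖z‖ := by
    intro z
    rcases eq_or_ne z 0 with rfl | hz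
    · simp
    · have hz' : ‖z‖ ≠ 0 := norm_ne_zero_iff.mpr hz
      have hu : ‖(‖z‖⁻¹ • z : ℂ)‖ = 1 := by
        rw [norm_smul, norm_inv, norm_norm, inv_mul_cancel₀ hz']
      have h1 : A z = ‖z‖ • A (‖z‖⁻¹ • z) := by
        rw [← map_smul, smul_inv_smul₀ hz']
      rw [h1, norm_smul, norm_norm, norm_eq _ 1 hu (by simp), mul_comm]
  -- Step 3: A z = a z + b conj z
  obtain ⟨a, b, hab⟩ : ∃ a b : ℂ, ∀ z : ℂ, A z = a * z + b * (starRingEnd ℂ) z := by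
    refine ⟨(A 1 - Complex.I * A Complex.I) / 2,
      (A 1 + Complex.I * A Complex.I) / 2, fun z => ?_⟩
    have hz1 : A z = z.re • A 1 + z.im • A Complex.I := by
      conv_lhs => rw [← Complex.re_add_im z,
        show (z.re : ℂ) + z.im * Complex.I = z.re • (1 : ℂ) + z.im • Complex.I by
          simp [Complex.real_smul]]
      rw [map_add, map_smul, map_smul]
    have hcz : (starRingEnd ℂ) z = (z.re : ℂ) - z.im * Complex.I := by
      apply Complex.ext <;> simp
    have hz2 : z = (z.re : ℂ) + z.im * Complex.I := (Complex.re_add_im z).symm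
    rw [hz1, Complex.real_smul, Complex.real_smul]
    linear_combination (-(A 1 - Complex.I * A Complex.I) / 2) * hz2 +
      (-(A 1 + Complex.I * A Complex.I) / 2) * hcz +
      (z.im : ℂ) * A Complex.I * Complex.I_sq
  -- Step 4: det A = normSq a - normSq b
  have hdet2 : LinearMap.det (A : ℂ →ₗ[ℝ] ℂ) = Complex.normSq a - Complex.normSq b := by
    rw [← LinearMap.det_toMatrix Complex.basisOneI, Matrix.det_fin_two]
    simp [LinearMap.toMatrix_apply, Complex.coe_basisOneI_repr, hab,
      Complex.normSq_apply]
    ring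
  -- Step 5: squared norm equations
  have sq : ∀ z : ℂ, Complex.normSq (a * z + b * (starRingEnd ℂ) z)
      = c ^ 2 * Complex.normSq z := by
    intro z
    have h1 := hnorm z
    rw [hab z] at h1
    have := congrArg (· ^ 2) h1
    simpa [← Complex.sq_norm, mul_pow] using this
  have eq1 := sq 1
  have eq2 := sq Complex.I
  have eq3 := sq (1 + Complex.I)
  simp only [Complex.normSq_apply, Complex.add_re, Complex.add_im, Complex.mul_re,
    Complex.mul_im, Complex.one_re, Complex.one_im, Complex.I_re, Complex.I_im,
    map_one, Complex.conj_I, Complex.neg_re, Complex.neg_im, Complex.conj_re,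
    Complex.conj_im, map_add] at eq1 eq2 eq3
  ring_nf at eq1 eq2 eq3
  have hw : a * (starRingEnd ℂ) b = 0 := by
    apply Complex.ext <;>
      simp only [Complex.mul_re, Complex.mul_im, Complex.conj_re, Complex.conj_im,
        Complex.zero_re, Complex.zero_im] <;> nlinarith [eq1, eq2, eq3]
  rcases mul_eq_zero.mp hw with haz | hbz
  · -- a = 0: det ≤ 0, contradiction
    exfalso
    rw [hdet2, haz] at hdet
    simp at hdet
    nlinarith [Complex.normSq_nonneg b, hdet]
  · have hb0 : b = 0 := by
      simpa using congrArg (starRingEnd ℂ) hbz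
    have ha0 : a ≠ 0 := by
      intro h
      rw [hdet2, h, hb0] at hdet
      simp at hdet
    refine ⟨‖a‖, norm_pos_iff.mpr ha0, a.arg, fun z => ?_⟩
    have habs : ((‖a‖ : ℝ) : ℂ) * Complex.exp (a.arg * Complex.I) = a :=
      Complex.norm_mul_exp_arg_mul_I a
    rw [hab z, hb0, Complex.real_smul, ← mul_assoc, habs]
    ring
end

section
/- A product of real 2×2 matrices D = C·B·A, where B is conformal (a positive multiple of a rotation) and C satisfies ‖C − I‖ < δ/2, approximately preserves the angle distortion of A: for unit vectors u₀, v₀, one has |⟨Du₀/|Du₀|, Dv₀/|Dv₀|⟩ − ⟨Au₀/|Au₀|, Av₀/|Av₀|⟩| < ε, provided δ > 0 is chosen (depending on ε) so that |u − z| < δ and |v − w| < δ for unit vectors imply |⟨u,v⟩ − ⟨z,w⟩| < ε. In particular, if A is nonconformal then for small enough δ the matrix D = C·B·A cannot be conformal. -/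
noncomputable section

/-- The real (Euclidean) inner product on the plane `ℂ ≅ ℝ²`. -/
def rinner (u v : ℂ) : ℝ := (u * (starRingEnd ℂ) v).re

/-- Normalization of a planar vector. -/
def nv (u : ℂ) : ℂ := ((‖u‖ : ℝ))⁻¹ • u

/-- A real-linear map of the plane is conformal if it is a positive multiple of a
rotation. -/
def IsConformalMap2 (D : ℂ →L[ℝ] ℂ) : Prop :=
  ∃ ρ : ℝ, 0 < ρ ∧ ∃ θ : ℝ, ∀ z : ℂ, D z = ρ • (Complex.exp (θ * Complex.I) * z)

lemma abs_nv {z : ℂ} (hz : z ≠ 0) : ‖nv z‖ = 1 := by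
  have h : ‖z‖ ≠ 0 := by simpa using hz
  rw [nv, norm_smul, norm_inv, norm_norm, inv_mul_cancel₀ h]

lemma nv_mul (c z : ℂ) : nv (c * z) = nv c * nv z := by
  simp only [nv, Complex.real_smul, norm_mul]
  push_cast
  ring

lemma rinner_mul (a u v : ℂ) : rinner (a*u) (a*v) = (‖a‖)^2 * rinner u v := by
  have h : a*u*((starRingEnd ℂ) (a*v)) = ((Complex.normSq a : ℝ) : ℂ) * (u * (starRingEnd ℂ) v) := by
    rw [map_mul]
    rw [show a*u*((starRingEnd ℂ) a * (starRingEnd ℂ) v) = (a * (starRingEnd ℂ) a) * (u * (starRingEnd ℂ) v) by ring, Complex.mul_conj]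
  rw [rinner, h, Complex.re_ofReal_mul, Complex.normSq_eq_norm_sq, rinner]

lemma nv_dist {a b : ℂ} (ha : a ≠ 0) (hb : b ≠ 0) :
    ‖nv a - nv b‖ ≤ 2 * ‖a - b‖ / ‖b‖ := by
  have hra : (0:ℝ) < ‖a‖ := by simpa [norm_pos_iff] using ha
  have hrb : (0:ℝ) < ‖b‖ := by simpa [norm_pos_iff] using hb
  set r := ‖a‖ with hr
  set s := ‖b‖ with hs
  have key : nv a - nv b = s⁻¹ • (a - b) + (r⁻¹ - s⁻¹) • a := by
    simp [nv, smul_sub, sub_smul, ← hr, ← hs]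
  rw [key]
  have h1 : ‖s⁻¹ • (a - b)‖ = s⁻¹ * ‖a - b‖ := by
    rw [norm_smul, Real.norm_eq_abs, abs_of_pos (inv_pos.mpr hrb)]
  have h2 : ‖(r⁻¹ - s⁻¹) • a‖ ≤ ‖a - b‖ / s := by
    have : ‖(r⁻¹ - s⁻¹) • a‖ = |r⁻¹ - s⁻¹| * r := by
      rw [norm_smul, Real.norm_eq_abs]
    rw [this]
    have hdiff : |r⁻¹ - s⁻¹| = |s - r| / (r * s) := by
      rw [inv_sub_inv hra.ne' hrb.ne', abs_div, abs_of_pos (mul_pos hra hrb)]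
    rw [hdiff]
    have hsr : |s - r| ≤ ‖a - b‖ := by
      have := abs_norm_sub_norm_le b a
      rw [norm_sub_rev]
      simpa [← hr, ← hs] using this
    calc |s - r| / (r * s) * r = |s - r| / s := by field_simp
      _ ≤ ‖a - b‖ / s := by gcongr
  calc ‖s⁻¹ • (a - b) + (r⁻¹ - s⁻¹) • a‖
      ≤ ‖s⁻¹ • (a - b)‖ + ‖(r⁻¹ - s⁻¹) • a‖ := norm_add_le _ _
    _ ≤ s⁻¹ * ‖a - b‖ + ‖a - b‖ / s := by
        rw [h1]; exact add_le_add le_rfl h2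
    _ = 2 * ‖a - b‖ / s := by field_simp; ring

lemma conf_rinner {E : ℂ →L[ℝ] ℂ} (hE : IsConformalMap2 E) {u v : ℂ} (hu : u ≠ 0) (hv : v ≠ 0) :
    rinner (nv (E u)) (nv (E v)) = rinner (nv u) (nv v) := by
  obtain ⟨ρ, hρ, θ, h⟩ := hE
  set c : ℂ := (ρ:ℂ) * Complex.exp (θ * Complex.I) with hc
  have hEz : ∀ z : ℂ, E z = c * z := by
    intro z; rw [h z, Complex.real_smul, hc]; ring
  have hcne : c ≠ 0 :=
    mul_ne_zero (by exact_mod_cast hρ.ne') (Complex.exp_ne_zero _)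
  have habs : ‖nv c‖ = 1 := abs_nv hcne
  rw [hEz u, hEz v, nv_mul c u, nv_mul c v, rinner_mul, habs]
  simp

/-- Let `D = C·B·A` with `B` conformal and `‖C − I‖ < δ/2`, where
`δ` is chosen (for a given `ε`) so that `δ`-perturbations of unit vectors change inner
products by less than `ε`. Then `D` distorts the angle between unit vectors `u₀, v₀`
almost exactly as `A` does:
`|⟨Du₀/|Du₀|, Dv₀/|Dv₀|⟩ − ⟨Au₀/|Au₀|, Av₀/|Av₀|⟩| < ε`. In particular, if `A` is
nonconformal at `u₀, v₀` and `ε` is at most the corresponding angle defect, then `D`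
cannot be conformal. -/
theorem composition_angle_distortion
    (A B C D : ℂ →L[ℝ] ℂ)
    (hA : Function.Bijective A) (hB : Function.Bijective B) (hC : Function.Bijective C)
    (hBconf : IsConformalMap2 B)
    (ε δ : ℝ) (hε : 0 < ε) (hδ : 0 < δ)
    (hδprop : ∀ u v z w : ℂ, ‖u‖ = 1 → ‖v‖ = 1 →
      ‖z‖ = 1 → ‖w‖ = 1 →
      ‖u - z‖ < δ → ‖v - w‖ < δ →
      |rinner u v - rinner z w| < ε)
    (hCnorm : ‖C - ContinuousLinearMap.id ℝ ℂ‖ < δ / 2)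
    (hD : D = C.comp (B.comp A))
    (u₀ v₀ : ℂ) (hu : ‖u₀‖ = 1) (hv : ‖v₀‖ = 1) :
    |rinner (nv (D u₀)) (nv (D v₀)) - rinner (nv (A u₀)) (nv (A v₀))| < ε ∧
    (rinner (nv (A u₀)) (nv (A v₀)) ≠ rinner u₀ v₀ →
      ε ≤ |rinner (nv (A u₀)) (nv (A v₀)) - rinner u₀ v₀| →
      ¬ IsConformalMap2 D) := by
  have hu0 : u₀ ≠ 0 := by intro h; rw [h] at hu; simp at hu
  have hv0 : v₀ ≠ 0 := by intro h; rw [h] at hv; simp at hv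
  have nzA : ∀ z : ℂ, z ≠ 0 → A z ≠ 0 := by
    intro z hz h; exact hz (hA.injective (by simpa using h))
  have nzB : ∀ z : ℂ, z ≠ 0 → B z ≠ 0 := by
    intro z hz h; exact hz (hB.injective (by simpa using h))
  have nzC : ∀ z : ℂ, z ≠ 0 → C z ≠ 0 := by
    intro z hz h; exact hz (hC.injective (by simpa using h))
  have hx : B (A u₀) ≠ 0 := nzB _ (nzA _ hu0)
  have hy : B (A v₀) ≠ 0 := nzB _ (nzA _ hv0)
  have hDu : D u₀ = C (B (A u₀)) := by rw [hD]; rfl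
  have hDv : D v₀ = C (B (A v₀)) := by rw [hD]; rfl
  have est : ∀ z : ℂ, z ≠ 0 → ‖nv (C z) - nv z‖ < δ := by
    intro z hz
    have hz' : (0:ℝ) < ‖z‖ := by simpa [norm_pos_iff] using hz
    have h1 : ‖C z - z‖ ≤ ‖C - ContinuousLinearMap.id ℝ ℂ‖ * ‖z‖ := by
      have := (C - ContinuousLinearMap.id ℝ ℂ).le_opNorm z
      simpa using this
    have h2 : ‖C z - z‖ < δ/2 * ‖z‖ :=
      h1.trans_lt (mul_lt_mul_of_pos_right hCnorm hz')
    calc ‖nv (C z) - nv z‖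
        ≤ 2 * ‖C z - z‖ / ‖z‖ := nv_dist (nzC z hz) hz
      _ < 2 * (δ/2 * ‖z‖) / ‖z‖ := by gcongr
      _ = δ := by field_simp
  have hmain : |rinner (nv (D u₀)) (nv (D v₀)) -
      rinner (nv (B (A u₀))) (nv (B (A v₀)))| < ε := by
    refine hδprop _ _ _ _ ?_ ?_ (abs_nv hx) (abs_nv hy) ?_ ?_
    · rw [hDu]; exact abs_nv (nzC _ hx)
    · rw [hDv]; exact abs_nv (nzC _ hy)
    · rw [hDu]; exact est _ hx
    · rw [hDv]; exact est _ hy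
  have hBr : rinner (nv (B (A u₀))) (nv (B (A v₀))) =
      rinner (nv (A u₀)) (nv (A v₀)) :=
    conf_rinner hBconf (nzA _ hu0) (nzA _ hv0)
  rw [hBr] at hmain
  refine ⟨hmain, ?_⟩
  intro _ hle hDconf
  have hDr : rinner (nv (D u₀)) (nv (D v₀)) = rinner (nv u₀) (nv v₀) :=
    conf_rinner hDconf hu0 hv0
  have hnvu : nv u₀ = u₀ := by simp [nv, hu]
  have hnvv : nv v₀ = v₀ := by simp [nv, hv]
  rw [hDr, hnvu, hnvv] at hmain
  rw [abs_sub_comm] at hmain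
  linarith [hle, hmain]


end
end
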